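/- Along any C¹ solution (ρ(t),ρ₁(t),ρ₂(t)) of the ODE system ρ̇ = 0, ρ̇₁ = -(ρ-ρ₁)(ρ-ρ₂)[ρ₂(μ(ρ₂)-μ(ρ₁)) + p(ρ₁) - p(ρ₂)], ρ̇₂ = (ρ-ρ₁)(ρ-ρ₂)[ρ₁(μ(ρ₁)-μ(ρ₂)) - p(ρ₁) + p(ρ₂)], with ρ₁(t) < ρ(t) < ρ₂(t), the total free energy F(ρ,ρ₁,ρ₂) = α₁f(ρ₁) + α₂f(ρ₂) is nonincreasing in time: d/dt F ≤ 0. -/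

import Mathlib

/-- Right-hand side of the relaxation ODE for `ρ₁`. -/
def odeR1 (μ p : ℝ → ℝ) (r r₁ r₂ : ℝ) : ℝ :=
  -((r - r₁) * (r - r₂) * (r₂ * (μ r₂ - μ r₁) + p r₁ - p r₂))

/-- Right-hand side of the relaxation ODE for `ρ₂`. -/
def odeR2 (μ p : ℝ → ℝ) (r r₁ r₂ : ℝ) : ℝ :=
  (r - r₁) * (r - r₂) * (r₁ * (μ r₁ - μ r₂) - p r₁ + p r₂)

/-- Along any C¹ solution of the relaxation dynamical system with
`ρ₁(t) < ρ(t) < ρ₂(t)`, the total free energy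
`F = α₁ f(ρ₁) + α₂ f(ρ₂)` is nonincreasing: `d/dt F ≤ 0`. -/
theorem free_energy_dissipation (f μ p : ℝ → ℝ)
    (hf : ContDiff ℝ 1 f)
    (hμ : ∀ ρ : ℝ, μ ρ = deriv f ρ)
    (hp : ∀ ρ : ℝ, p ρ = ρ * μ ρ - f ρ)
    (ρ ρ₁ ρ₂ : ℝ → ℝ)
    (hord : ∀ t : ℝ, ρ₁ t < ρ t ∧ ρ t < ρ₂ t)
    (hρ : ∀ t : ℝ, HasDerivAt ρ 0 t)
    (hρ₁ : ∀ t : ℝ, HasDerivAt ρ₁ (odeR1 μ p (ρ t) (ρ₁ t) (ρ₂ t)) t)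
    (hρ₂ : ∀ t : ℝ, HasDerivAt ρ₂ (odeR2 μ p (ρ t) (ρ₁ t) (ρ₂ t)) t) :
    ∀ t : ℝ,
      deriv (fun s : ℝ =>
        ((ρ s - ρ₂ s) / (ρ₁ s - ρ₂ s)) * f (ρ₁ s)
          + (1 - (ρ s - ρ₂ s) / (ρ₁ s - ρ₂ s)) * f (ρ₂ s)) t ≤ 0 := by
  intro t
  obtain ⟨h1t, h2t⟩ := hord t
  have hdneg : ρ₁ t - ρ₂ t < 0 := by linarith
  have hdne : ρ₁ t - ρ₂ t ≠ 0 := ne_of_lt hdneg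
  have hK : (ρ t - ρ₁ t) * (ρ t - ρ₂ t) < 0 :=
    mul_neg_of_pos_of_neg (by linarith) (by linarith)
  have hfd : Differentiable ℝ f := hf.differentiable one_ne_zero
  have hf1 : HasDerivAt (fun s => f (ρ₁ s))
      (deriv f (ρ₁ t) * odeR1 μ p (ρ t) (ρ₁ t) (ρ₂ t)) t :=
    ((hfd (ρ₁ t)).hasDerivAt).comp t (hρ₁ t)
  have hf2 : HasDerivAt (fun s => f (ρ₂ s))
      (deriv f (ρ₂ t) * odeR2 μ p (ρ t) (ρ₁ t) (ρ₂ t)) t :=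
    ((hfd (ρ₂ t)).hasDerivAt).comp t (hρ₂ t)
  have hnum : HasDerivAt (fun s => ρ s - ρ₂ s)
      (0 - odeR2 μ p (ρ t) (ρ₁ t) (ρ₂ t)) t := (hρ t).sub (hρ₂ t)
  have hden : HasDerivAt (fun s => ρ₁ s - ρ₂ s)
      (odeR1 μ p (ρ t) (ρ₁ t) (ρ₂ t) - odeR2 μ p (ρ t) (ρ₁ t) (ρ₂ t)) t :=
    (hρ₁ t).sub (hρ₂ t)
  have hq : HasDerivAt (fun s => (ρ s - ρ₂ s) / (ρ₁ s - ρ₂ s))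
      (((0 - odeR2 μ p (ρ t) (ρ₁ t) (ρ₂ t)) * (ρ₁ t - ρ₂ t)
        - (ρ t - ρ₂ t) * (odeR1 μ p (ρ t) (ρ₁ t) (ρ₂ t)
            - odeR2 μ p (ρ t) (ρ₁ t) (ρ₂ t))) / (ρ₁ t - ρ₂ t) ^ 2) t :=
    hnum.div hden hdne
  have hq' : HasDerivAt (fun s => 1 - (ρ s - ρ₂ s) / (ρ₁ s - ρ₂ s))
      (-(((0 - odeR2 μ p (ρ t) (ρ₁ t) (ρ₂ t)) * (ρ₁ t - ρ₂ t)
        - (ρ t - ρ₂ t) * (odeR1 μ p (ρ t) (ρ₁ t) (ρ₂ t)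
            - odeR2 μ p (ρ t) (ρ₁ t) (ρ₂ t))) / (ρ₁ t - ρ₂ t) ^ 2)) t :=
    hq.const_sub 1
  have hF : HasDerivAt (fun s : ℝ =>
      ((ρ s - ρ₂ s) / (ρ₁ s - ρ₂ s)) * f (ρ₁ s)
        + (1 - (ρ s - ρ₂ s) / (ρ₁ s - ρ₂ s)) * f (ρ₂ s))
      ((((ρ t - ρ₁ t) * (ρ t - ρ₂ t)) / (ρ₁ t - ρ₂ t)) *
        ((ρ t - ρ₁ t) * (ρ t - ρ₂ t) * (deriv f (ρ₁ t) - deriv f (ρ₂ t)) ^ 2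
          - (f (ρ₁ t) - f (ρ₂ t) - deriv f (ρ₂ t) * (ρ₁ t - ρ₂ t)
              - (ρ t - ρ₂ t) * (deriv f (ρ₁ t) - deriv f (ρ₂ t))) ^ 2)) t := by
    have h := (hq.mul hf1).add (hq'.mul hf2)
    refine HasDerivAt.congr_deriv h ?_
    simp only [odeR1, odeR2, hp, hμ]
    field_simp
    ring
  rw [hF.deriv]
  have h1 : 0 < ((ρ t - ρ₁ t) * (ρ t - ρ₂ t)) / (ρ₁ t - ρ₂ t) :=
    div_pos_of_neg_of_neg hK hdneg
  have h2 : (ρ t - ρ₁ t) * (ρ t - ρ₂ t) * (deriv f (ρ₁ t) - deriv f (ρ₂ t)) ^ 2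
      - (f (ρ₁ t) - f (ρ₂ t) - deriv f (ρ₂ t) * (ρ₁ t - ρ₂ t)
          - (ρ t - ρ₂ t) * (deriv f (ρ₁ t) - deriv f (ρ₂ t))) ^ 2 ≤ 0 := by
    nlinarith [sq_nonneg (deriv f (ρ₁ t) - deriv f (ρ₂ t)),
      sq_nonneg (f (ρ₁ t) - f (ρ₂ t) - deriv f (ρ₂ t) * (ρ₁ t - ρ₂ t)
          - (ρ t - ρ₂ t) * (deriv f (ρ₁ t) - deriv f (ρ₂ t)))]
  exact mul_nonpos_of_nonneg_of_nonpos h1.le h2
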